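/- arXiv:2103.00394 — 2 statements merged into one kernel-verified Lean document; each statement's English description precedes it below -/
import Mathlib

section
/- Let d ∈ ℕ₊, p > 0, σ > 0, ε ∈ (0, d+2p], λ > 0, and let k be the two-moment kernel with these parameters. Then there exists a constant C > 0, depending only on (d, p, σ, ε, λ), such that for all x, y ∈ ℝ^d: k(x,y) ≤ C (1 + ‖x‖^{d+2p+ε} + ‖y‖^{d+2p+ε}). -/
open MeasureTheory ProbabilityTheory Real
open scoped ENNReal NNReal InnerProductSpace

noncomputable section

/-- Euclidean space `ℝ^d`. -/
abbrev Euc (d : ℕ) := EuclideanSpace ℝ (Fin d)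

/-- The optimal transport cost with cost `‖x - y‖ ^ p`, defined as the infimum of
`∫ ‖x − y‖^p dπ` over all couplings `π` of `P` and `Q`. -/
def OTCost {X : Type*} [MeasurableSpace X] [NormedAddCommGroup X] (p : ℝ)
    (P Q : Measure X) : ℝ :=
  ⨅ pl : {pl : Measure (X × X) //
      pl.map Prod.fst = P ∧ pl.map Prod.snd = Q ∧ IsProbabilityMeasure pl},
    ∫ z, ‖z.1 - z.2‖ ^ p ∂(pl.1)

/-- The isotropic Gaussian measure on `ℝ^d` with mean zero and covariance `σ² I_d`. -/
def gaussianMeasure (d : ℕ) (σ : ℝ) : Measure (Euc d) :=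
  (Measure.pi fun _ : Fin d => gaussianReal 0 (σ ^ 2).toNNReal).map
    (MeasurableEquiv.toLp 2 (Fin d → ℝ))

/-- The standard Gaussian measure on `ℝ^d`. -/
def stdGaussian (d : ℕ) : Measure (Euc d) := gaussianMeasure d 1

/-- Gaussian-smoothed optimal transport cost `T_p^{(σ)}(P,Q) = T_p(P ∗ N_σ, Q ∗ N_σ)`. -/
def GOT (d : ℕ) (p σ : ℝ) (P Q : Measure (Euc d)) : ℝ :=
  OTCost p (Measure.conv P (gaussianMeasure d σ)) (Measure.conv Q (gaussianMeasure d σ))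

/-- Empirical measure of the samples `ω 0, …, ω (n-1)`. -/
def empMeasure {X : Type*} [MeasurableSpace X] {n : ℕ} (ω : Fin n → X) : Measure X :=
  (n : ℝ≥0∞)⁻¹ • ∑ i : Fin n, Measure.dirac (ω i)

/-- A symmetric positive-definite kernel. -/
def IsPosDefKernel {X : Type*} (k : X → X → ℝ) : Prop :=
  (∀ x y, k x y = k y x) ∧
    ∀ (n : ℕ) (x : Fin n → X) (c : Fin n → ℝ),
      0 ≤ ∑ i : Fin n, ∑ j : Fin n, c i * c j * k (x i) (x j)

/-- The squared kernel MMD distance `γ_k²(P,Q) = ∬ k d(P−Q) d(P−Q)`. -/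
def mmdSq {X : Type*} [MeasurableSpace X] (k : X → X → ℝ) (P Q : Measure X) : ℝ :=
  (∫ x, ∫ y, k x y ∂P ∂P) + (∫ x, ∫ y, k x y ∂Q ∂Q) - 2 * ∫ x, ∫ y, k x y ∂Q ∂P

/-- The kernel MMD distance `γ_k(P,Q)`. -/
def mmd {X : Type*} [MeasurableSpace X] (k : X → X → ℝ) (P Q : Measure X) : ℝ :=
  Real.sqrt (mmdSq k P Q)

/-- `M_{d,u}(s)`: the `s`-th moment of the noncentral chi distribution with `d` degrees of
freedom and noncentrality parameter `u`, i.e. the `s`-th moment of `‖Z‖` for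
`Z ∼ N(μ, I_d)` with `‖μ‖ = u`. -/
def Mdu (d : ℕ) (u s : ℝ) : ℝ :=
  ∫ z : Fin d → ℝ,
      (Real.sqrt (∑ i : Fin d, (z i + if (i : ℕ) = 0 then u else 0) ^ 2)) ^ s
    ∂(Measure.pi fun _ => gaussianReal 0 1)

/-- `M_d(s) = 2^{s/2} Γ((d+s)/2)/Γ(d/2)`, the `s`-th moment of the chi distribution with `d`
degrees of freedom (extended to real `d`). -/
def Md (d s : ℝ) : ℝ := 2 ^ (s / 2) * Real.Gamma ((d + s) / 2) / Real.Gamma (d / 2)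

/-- `M̄_d(s) = ((d+s)/e)^{s/2} ((d+s)/d)^{(d−1)/2}`. -/
def Mbar (d s : ℝ) : ℝ :=
  ((d + s) / Real.exp 1) ^ (s / 2) * ((d + s) / d) ^ ((d - 1) / 2)

/-- The constant `α_{d,p} = 2π · 2^{−(p+d)} · 2^{−d/2} / Γ(d/2)`. -/
def alphaDP (d : ℕ) (p : ℝ) : ℝ :=
  2 * Real.pi * 2 ^ (-(p + (d : ℝ))) * 2 ^ (-(d : ℝ) / 2) / Real.Gamma ((d : ℝ) / 2)

/-- The function `J` of the two-moment kernel. -/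
def twoMomentJ (d : ℕ) (p eps lam u : ℝ) : ℝ :=
  (lam ^ eps * Mdu d u ((d : ℝ) + 2 * p - eps) +
    lam ^ (-eps) * Mdu d u ((d : ℝ) + 2 * p + eps)) / (2 * eps)

/-- The two-moment kernel with parameters `(d, p, σ, ε, λ)`. -/
def twoMomentKernel (d : ℕ) (p σ eps lam : ℝ) (x y : Euc d) : ℝ :=
  alphaDP d p * Real.exp (-‖x - y‖ ^ 2 / (4 * σ ^ 2)) *
    twoMomentJ d p eps lam (‖x + y‖ / (Real.sqrt 2 * σ))

/-- A (law of a) random vector in `ℝ^d` is sub-gamma with variance parameter `v` and scale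
parameter `b` if `E[exp(⟨α,X⟩)] ≤ exp(v‖α‖²/(2(1−b‖α‖)))` for all `α` with `b‖α‖ < 1`
(for `‖α‖ = 1/b` the right-hand side is `+∞` so the constraint is vacuous). -/
def IsSubGamma {d : ℕ} (μ : Measure (Euc d)) (v b : ℝ) : Prop :=
  ∀ α : Euc d, b * ‖α‖ < 1 →
    ∫ x, Real.exp (⟪α, x⟫_ℝ) ∂μ ≤ Real.exp (v * ‖α‖ ^ 2 / (2 * (1 - b * ‖α‖)))

/-- The Hellinger distance between two probability measures, computed with respect to the
dominating measure `μ + ν`. -/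
def hellingerDist {X : Type*} [MeasurableSpace X] (μ ν : Measure X) : ℝ :=
  Real.sqrt ((1 / 2) * ∫ x,
    (Real.sqrt ((μ.rnDeriv (μ + ν) x).toReal) -
      Real.sqrt ((ν.rnDeriv (μ + ν) x).toReal)) ^ 2 ∂(μ + ν))

/-- `ω_d = 2 π^{d/2} / Γ(d/2)`, the volume (surface area) of the unit sphere in `ℝ^d`. -/
def omegaD (d : ℕ) : ℝ := 2 * Real.pi ^ ((d : ℝ) / 2) / Real.Gamma ((d : ℝ) / 2)

/-- The standard Gaussian density `φ(u) = (2π)^{−d/2} e^{−‖u‖²/2}` on `ℝ^d`. -/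
def gaussPDF (d : ℕ) (u : Euc d) : ℝ :=
  (2 * Real.pi) ^ (-(d : ℝ) / 2) * Real.exp (-‖u‖ ^ 2 / 2)

/-- The feature map
`ψ_x(z) = (√ω_d / 2^{(d+p)/2}) ‖z‖^{(d−1+2p)/2} f(‖z‖)^{−1/2} φ(z/√2 − x/σ)`. -/
def featureMap (d : ℕ) (p σ : ℝ) (f : ℝ → ℝ) (x z : Euc d) : ℝ :=
  Real.sqrt (omegaD d) / 2 ^ (((d : ℝ) + p) / 2) *
    (‖z‖ ^ (((d : ℝ) - 1 + 2 * p) / 2) / Real.sqrt (f ‖z‖)) *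
    gaussPDF d ((Real.sqrt 2)⁻¹ • z - σ⁻¹ • x)

/-- The feature-map kernel `k(x,y) = ∫ ψ_x(z) ψ_y(z) dz`. -/
def featureKernel (d : ℕ) (p σ : ℝ) (f : ℝ → ℝ) (x y : Euc d) : ℝ :=
  ∫ z, featureMap d p σ f x z * featureMap d p σ f y z

/-- The density `g_{d,u}` of the noncentral chi distribution with `d` degrees of freedom and
noncentrality parameter `u`. -/
def noncentralChiPDF (d : ℕ) (u x : ℝ) : ℝ :=
  Real.exp (-(x ^ 2 + u ^ 2) / 2) * x ^ ((d : ℝ) - 1) / 2 ^ ((d : ℝ) / 2 - 1) *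
    ∑' k : ℕ, (u * x / 2) ^ (2 * k) / ((Nat.factorial k : ℝ) * Real.Gamma (((d : ℝ) + 2 * k) / 2))

/-- `I_f(u) = (ω_d / (2^{d+p} (2π)^{d/2})) ∫₀^∞ (x^{d−1+2p}/f(x)) g_{d,u}(x) dx`. -/
def Ifun (d : ℕ) (p : ℝ) (f : ℝ → ℝ) (u : ℝ) : ℝ :=
  omegaD d / (2 ^ ((d : ℝ) + p) * (2 * Real.pi) ^ ((d : ℝ) / 2)) *
    ∫ x in Set.Ioi (0 : ℝ), x ^ ((d : ℝ) - 1 + 2 * p) / f x * noncentralChiPDF d u x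

/-- The radial density `r_σ(x) = (√2/σ) f((√2/σ)x) / (ω_d x^{d−1})`. -/
def rSigma (d : ℕ) (σ : ℝ) (f : ℝ → ℝ) (x : ℝ) : ℝ :=
  Real.sqrt 2 / σ * f (Real.sqrt 2 / σ * x) / (omegaD d * x ^ ((d : ℝ) - 1))



lemma tmk_integrable_prod {ν : Measure ℝ} [SigmaFinite ν] {f : ℝ → ℝ}
    (hf : Integrable f ν) (n : ℕ) :
    Integrable (fun z : Fin n → ℝ => ∏ i, f (z i)) (Measure.pi fun _ => ν) := by
  induction n with
  | zero =>
      simp only [Finset.univ_eq_empty, Finset.prod_empty]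
      rw [integrable_const_iff]
      right
      rw [Measure.pi_of_empty]
      infer_instance
  | succ n ih =>
      have h := (measurePreserving_piFinSuccAbove (fun _ : Fin (n+1) => ν) 0).symm
      rw [← h.integrable_comp_emb (MeasurableEquiv.measurableEmbedding _)]
      simp_rw [MeasurableEquiv.piFinSuccAbove_symm_apply, Fin.insertNthEquiv,
        Fin.prod_univ_succ, Fin.insertNth_zero]
      simp only [Fin.zero_succAbove, Equiv.coe_fn_mk, Function.comp_def, Fin.cons_zero,
        Fin.cons_succ]
      exact Integrable.mul_prod hf ih

lemma tmk_integrable_exp_abs : Integrable (fun t => Real.exp |t|) (gaussianReal 0 1) := by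
  rw [gaussianReal_of_var_ne_zero 0 one_ne_zero,
    integrable_withDensity_iff (measurable_gaussianPDF 0 1)
      (ae_of_all _ fun x => ENNReal.ofReal_lt_top)]
  have hpdf : ∀ x : ℝ, ((gaussianPDF 0 1 x).toReal) = (Real.sqrt (2*π))⁻¹ * Real.exp (-x^2/2) := by
    intro x
    rw [gaussianPDF, ENNReal.toReal_ofReal (gaussianPDFReal_nonneg 0 1 x)]
    simp [gaussianPDFReal]
  refine Integrable.mono' (g := fun x => ((Real.sqrt (2*π))⁻¹ * Real.exp 1) * Real.exp (-(4⁻¹) * x^2)) (((integrable_exp_neg_mul_sq (by norm_num : (0:ℝ) < 4⁻¹)).const_mul _)) ?_ (ae_of_all _ fun x => ?_)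
  · exact (((measurable_id.abs.exp).mul
      ((measurable_gaussianPDF 0 1).ennreal_toReal)).aestronglyMeasurable)
  · rw [hpdf x, Real.norm_eq_abs, abs_of_nonneg (by positivity)]
    have h1 : |x| + (-x^2/2) ≤ 1 + (-(4⁻¹) * x^2) := by
      nlinarith [sq_nonneg (|x| - 2), sq_abs x]
    calc Real.exp |x| * ((Real.sqrt (2*π))⁻¹ * Real.exp (-x^2/2))
        = (Real.sqrt (2*π))⁻¹ * Real.exp (|x| + (-x^2/2)) := by rw [Real.exp_add]; ring
      _ ≤ (Real.sqrt (2*π))⁻¹ * Real.exp (1 + (-(4⁻¹) * x^2)) := by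
          gcongr
      _ = ((Real.sqrt (2*π))⁻¹ * Real.exp 1) * Real.exp (-(4⁻¹) * x^2) := by
          rw [Real.exp_add]; ring

lemma tmk_sqrt_tri {d : ℕ} (a b : Fin d → ℝ) :
    Real.sqrt (∑ i, (a i + b i) ^ 2) ≤
      Real.sqrt (∑ i, (a i) ^ 2) + Real.sqrt (∑ i, (b i) ^ 2) := by
  have h := norm_add_le (WithLp.toLp 2 a : EuclideanSpace ℝ (Fin d)) (WithLp.toLp 2 b)
  simpa [EuclideanSpace.norm_eq, ← WithLp.toLp_add, sq_abs] using h

lemma tmk_sqrt_le_sum_abs {d : ℕ} (a : Fin d → ℝ) :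
    Real.sqrt (∑ i, (a i) ^ 2) ≤ ∑ i, |a i| := by
  rw [show (∑ i, (a i) ^ 2) = ∑ i, |a i| ^ 2 by simp [sq_abs]]
  have h := Finset.sum_sq_le_sq_sum_of_nonneg (s := Finset.univ)
    (f := fun i => |a i|) (fun i _ => abs_nonneg _)
  calc Real.sqrt (∑ i, |a i| ^ 2) ≤ Real.sqrt ((∑ i, |a i|) ^ 2) := Real.sqrt_le_sqrt h
    _ = ∑ i, |a i| := Real.sqrt_sq (Finset.sum_nonneg fun i _ => abs_nonneg _)

lemma tmk_rpow_le_exp {s : ℝ} (hs : 0 ≤ s) {t : ℝ} (ht : 0 ≤ t) :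
    t ^ s ≤ (1 + (Nat.factorial (Nat.ceil s)) : ℝ) * Real.exp t := by
  set n := Nat.ceil s with hn
  have hfac : (0:ℝ) < (n.factorial : ℝ) := by exact_mod_cast Nat.factorial_pos n
  have h3 : (1:ℝ) ≤ Real.exp t := Real.one_le_exp ht
  have h2 : t ^ (n : ℕ) ≤ (n.factorial : ℝ) * Real.exp t := by
    have := Real.pow_div_factorial_le_exp t ht n
    rw [div_le_iff₀ hfac] at this
    linarith
  have hts : t ^ s ≤ 1 + t ^ (n : ℕ) := by
    rcases le_or_gt t 1 with h | h
    · have h1 := Real.rpow_le_one ht h hs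
      have h0 : (0:ℝ) ≤ t ^ (n : ℕ) := pow_nonneg ht n
      linarith
    · have h1 : t ^ s ≤ t ^ (n : ℝ) :=
        Real.rpow_le_rpow_of_exponent_le h.le (Nat.le_ceil s)
      rw [Real.rpow_natCast] at h1
      linarith
  calc t ^ s ≤ 1 + t ^ (n : ℕ) := hts
    _ ≤ Real.exp t + (n.factorial : ℝ) * Real.exp t := by linarith
    _ = (1 + (n.factorial : ℝ)) * Real.exp t := by ring

lemma tmk_add_rpow_le {a b s : ℝ} (ha : 0 ≤ a) (hb : 0 ≤ b) (hs : 0 ≤ s) :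
    (a + b) ^ s ≤ 2 ^ s * (a ^ s + b ^ s) := by
  have hm : 0 ≤ max a b := le_max_of_le_left ha
  have h1 : a + b ≤ 2 * max a b := by
    rcases le_total a b with h | h
    · have := max_eq_right h; nlinarith [le_max_left a b, le_max_right a b]
    · nlinarith [le_max_left a b, le_max_right a b]
  calc (a + b) ^ s ≤ (2 * max a b) ^ s :=
        Real.rpow_le_rpow (by linarith) h1 hs
    _ = 2 ^ s * (max a b) ^ s := Real.mul_rpow (by norm_num) hm
    _ ≤ 2 ^ s * (a ^ s + b ^ s) := by
        have h2 : (max a b) ^ s ≤ a ^ s + b ^ s := by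
          rcases max_cases a b with ⟨he, _⟩ | ⟨he, _⟩ <;> rw [he]
          · exact le_add_of_nonneg_right (Real.rpow_nonneg hb s)
          · exact le_add_of_nonneg_left (Real.rpow_nonneg ha s)
        have : (0:ℝ) ≤ (2:ℝ) ^ s := Real.rpow_nonneg (by norm_num) s
        nlinarith

/-- auxiliary: integral of `∏ exp |z i|` over the standard product Gaussian. -/
def tmkA (d : ℕ) : ℝ :=
  ∫ z : Fin d → ℝ, ∏ i : Fin d, Real.exp |z i| ∂(Measure.pi fun _ => gaussianReal 0 1)

lemma tmkA_nonneg (d : ℕ) : 0 ≤ tmkA d :=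
  integral_nonneg fun z => Finset.prod_nonneg fun i _ => (Real.exp_pos _).le

lemma tmk_Mdu_nonneg (d : ℕ) (u s : ℝ) : 0 ≤ Mdu d u s :=
  integral_nonneg fun z => Real.rpow_nonneg (Real.sqrt_nonneg _) _

lemma tmk_Mdu_le (d : ℕ) (hd : 0 < d) {u s : ℝ} (hu : 0 ≤ u) (hs : 0 ≤ s) :
    Mdu d u s ≤ 2 ^ s *
      ((1 + (Nat.factorial (Nat.ceil s)) : ℝ) * tmkA d + u ^ s) := by
  set γ : Measure (Fin d → ℝ) := Measure.pi fun _ => gaussianReal 0 1 with hγ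
  set Cs : ℝ := (1 + (Nat.factorial (Nat.ceil s)) : ℝ) with hCs
  have hCs0 : (0:ℝ) ≤ Cs := by positivity
  have h2s : (0:ℝ) ≤ (2:ℝ) ^ s := Real.rpow_nonneg (by norm_num) s
  set g : (Fin d → ℝ) → ℝ := fun z => 2 ^ s * (Cs * ∏ i, Real.exp |z i| + u ^ s) with hg
  have hgint : Integrable g γ := by
    exact (((tmk_integrable_prod tmk_integrable_exp_abs d).const_mul Cs).add
      (integrable_const _)).const_mul _
  have hbound : ∀ z : Fin d → ℝ,
      (Real.sqrt (∑ i : Fin d, (z i + if (i : ℕ) = 0 then u else 0) ^ 2)) ^ s ≤ g z := by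
    intro z
    set N : ℝ := Real.sqrt (∑ i : Fin d, (z i) ^ 2) with hN
    have hN0 : 0 ≤ N := Real.sqrt_nonneg _
    have hcs : (∑ i : Fin d, (if (i : ℕ) = 0 then u else 0) ^ 2) = u ^ 2 := by
      have hmem : (⟨0, hd⟩ : Fin d) ∈ Finset.univ := Finset.mem_univ _
      rw [Finset.sum_eq_single (⟨0, hd⟩ : Fin d)]
      · simp
      · intro i _ hne
        have : (i : ℕ) ≠ 0 := by
          intro h
          exact hne (Fin.ext h)
        simp [this]
      · intro h; exact absurd hmem h
    have key : Real.sqrt (∑ i : Fin d, (z i + if (i : ℕ) = 0 then u else 0) ^ 2) ≤ N + u := by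
      refine (tmk_sqrt_tri z (fun i => if (i : ℕ) = 0 then u else 0)).trans ?_
      rw [hcs, Real.sqrt_sq hu]
    have step1 : (Real.sqrt (∑ i : Fin d, (z i + if (i : ℕ) = 0 then u else 0) ^ 2)) ^ s
        ≤ (N + u) ^ s := Real.rpow_le_rpow (Real.sqrt_nonneg _) key hs
    have step2 : (N + u) ^ s ≤ 2 ^ s * (N ^ s + u ^ s) := tmk_add_rpow_le hN0 hu hs
    have step3 : N ^ s ≤ Cs * ∏ i, Real.exp |z i| := by
      have hNle : N ≤ ∑ i, |z i| := tmk_sqrt_le_sum_abs z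
      calc N ^ s ≤ Cs * Real.exp N := tmk_rpow_le_exp hs hN0
        _ ≤ Cs * Real.exp (∑ i, |z i|) := by
            exact mul_le_mul_of_nonneg_left (Real.exp_le_exp.mpr hNle) hCs0
        _ = Cs * ∏ i, Real.exp |z i| := by rw [Real.exp_sum]
    calc (Real.sqrt (∑ i : Fin d, (z i + if (i : ℕ) = 0 then u else 0) ^ 2)) ^ s
        ≤ 2 ^ s * (N ^ s + u ^ s) := step1.trans step2
      _ ≤ g z := by
          rw [hg]
          exact mul_le_mul_of_nonneg_left (add_le_add step3 le_rfl) h2s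
  have hmono : Mdu d u s ≤ ∫ z, g z ∂γ := by
    refine integral_mono_of_nonneg (ae_of_all _ fun z => ?_) hgint (ae_of_all _ hbound)
    exact Real.rpow_nonneg (Real.sqrt_nonneg _) _
  refine hmono.trans (le_of_eq ?_)
  have : IsProbabilityMeasure γ := by infer_instance
  rw [hg]
  rw [integral_const_mul]
  rw [integral_add ((tmk_integrable_prod tmk_integrable_exp_abs d).const_mul Cs)
    (integrable_const _)]
  rw [integral_const_mul, integral_const]
  simp [tmkA, hγ]

set_option maxHeartbeats 1000000 in
/-- polynomial growth bound for the two-moment kernel. -/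
theorem twoMomentKernel_growth_bound (d : ℕ) (hd : 0 < d) (p σ eps lam : ℝ)
    (hp : 0 < p) (hσ : 0 < σ) (heps : 0 < eps) (heps2 : eps ≤ (d : ℝ) + 2 * p)
    (hlam : 0 < lam) :
    ∃ C : ℝ, 0 < C ∧ ∀ x y : Euc d,
      twoMomentKernel d p σ eps lam x y ≤
        C * (1 + ‖x‖ ^ ((d : ℝ) + 2 * p + eps) + ‖y‖ ^ ((d : ℝ) + 2 * p + eps)) := by
  have hdpos : (0:ℝ) < d := by exact_mod_cast hd
  set s1 : ℝ := (d : ℝ) + 2 * p - eps with hs1def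
  set s2 : ℝ := (d : ℝ) + 2 * p + eps with hs2def
  have hs1 : 0 ≤ s1 := by rw [hs1def]; linarith
  have hs2 : 0 ≤ s2 := by rw [hs2def]; linarith
  have hs12 : s1 ≤ s2 := by rw [hs1def, hs2def]; linarith
  have hα : 0 < alphaDP d p := by
    unfold alphaDP
    apply div_pos
    · exact mul_pos (mul_pos (by positivity) (Real.rpow_pos_of_pos (by norm_num) _))
        (Real.rpow_pos_of_pos (by norm_num) _)
    · exact Real.Gamma_pos_of_pos (by positivity)
  set C1 : ℝ := (1 + (Nat.factorial (Nat.ceil s1)) : ℝ) with hC1def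
  set C2 : ℝ := (1 + (Nat.factorial (Nat.ceil s2)) : ℝ) with hC2def
  have hC1 : 0 ≤ C1 := by rw [hC1def]; positivity
  have hC2 : 0 ≤ C2 := by rw [hC2def]; positivity
  set G : ℝ := tmkA d with hGdef
  have hG : 0 ≤ G := tmkA_nonneg d
  set L1 : ℝ := lam ^ eps with hL1def
  set L2 : ℝ := lam ^ (-eps) with hL2def
  have hL1 : 0 < L1 := Real.rpow_pos_of_pos hlam _
  have hL2 : 0 < L2 := Real.rpow_pos_of_pos hlam _
  have h2s1 : (0:ℝ) ≤ 2 ^ s1 := Real.rpow_nonneg (by norm_num) _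
  have h2s2 : (0:ℝ) ≤ 2 ^ s2 := Real.rpow_nonneg (by norm_num) _
  set D1 : ℝ := (L1 * (2 ^ s1 * (C1 * G + 1)) + L2 * (2 ^ s2 * (C2 * G + 1))) / (2 * eps)
    with hD1def
  set D2 : ℝ := (L1 * 2 ^ s1 + L2 * 2 ^ s2) / (2 * eps) with hD2def
  have hD1 : 0 ≤ D1 := by
    rw [hD1def]
    apply div_nonneg _ (by linarith)
    have : 0 ≤ C1 * G + 1 := by positivity
    have : 0 ≤ C2 * G + 1 := by positivity
    positivity
  have hD2 : 0 ≤ D2 := by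
    rw [hD2def]
    apply div_nonneg _ (by linarith)
    positivity
  set E : ℝ := 2 ^ s2 / (Real.sqrt 2 * σ) ^ s2 with hEdef
  have hE : 0 ≤ E := by
    rw [hEdef]
    apply div_nonneg h2s2 (Real.rpow_nonneg (by positivity) _)
  refine ⟨alphaDP d p * (D1 + D2 * E) + 1, by positivity, fun x y => ?_⟩
  set X : ℝ := ‖x‖ ^ s2 with hXdef
  set Y : ℝ := ‖y‖ ^ s2 with hYdef
  have hX : 0 ≤ X := Real.rpow_nonneg (norm_nonneg _) _
  have hY : 0 ≤ Y := Real.rpow_nonneg (norm_nonneg _) _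
  set u : ℝ := ‖x + y‖ / (Real.sqrt 2 * σ) with hudef
  have hu : 0 ≤ u := by rw [hudef]; positivity
  have hJ0 : 0 ≤ twoMomentJ d p eps lam u := by
    unfold twoMomentJ
    apply div_nonneg _ (by linarith)
    rw [← hs1def, ← hs2def, ← hL1def, ← hL2def]
    exact add_nonneg (mul_nonneg hL1.le (tmk_Mdu_nonneg _ _ _))
      (mul_nonneg hL2.le (tmk_Mdu_nonneg _ _ _))
  have hk1 : twoMomentKernel d p σ eps lam x y ≤
      alphaDP d p * twoMomentJ d p eps lam u := by
    unfold twoMomentKernel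
    rw [← hudef]
    have hexp : Real.exp (-‖x - y‖ ^ 2 / (4 * σ ^ 2)) ≤ 1 := by
      rw [Real.exp_le_one_iff]
      apply div_nonpos_of_nonpos_of_nonneg _ (by positivity)
      simp only [neg_nonpos]
      positivity
    calc alphaDP d p * Real.exp (-‖x - y‖ ^ 2 / (4 * σ ^ 2)) * twoMomentJ d p eps lam u
        ≤ alphaDP d p * 1 * twoMomentJ d p eps lam u := by gcongr
      _ = alphaDP d p * twoMomentJ d p eps lam u := by ring
  have hu12 : u ^ s1 ≤ 1 + u ^ s2 := by
    rcases le_total u 1 with h | h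
    · have h1 := Real.rpow_le_one hu h hs1
      have h2 := Real.rpow_nonneg hu s2
      linarith
    · have h1 : u ^ s1 ≤ u ^ s2 := Real.rpow_le_rpow_of_exponent_le h hs12
      linarith
  have hJle : twoMomentJ d p eps lam u ≤ D1 + D2 * u ^ s2 := by
    have hM1 := tmk_Mdu_le d hd hu hs1
    have hM2 := tmk_Mdu_le d hd hu hs2
    have b1 : Mdu d u s1 ≤ 2 ^ s1 * (C1 * G + 1) + 2 ^ s1 * u ^ s2 := by
      refine hM1.trans ?_
      rw [← hC1def, ← hGdef]
      nlinarith [mul_le_mul_of_nonneg_left hu12 h2s1]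
    have b2 : Mdu d u s2 ≤ 2 ^ s2 * (C2 * G + 1) + 2 ^ s2 * u ^ s2 := by
      refine hM2.trans ?_
      rw [← hC2def, ← hGdef]
      have hx : u ^ s2 ≤ 1 + u ^ s2 := by linarith
      nlinarith [mul_le_mul_of_nonneg_left hx h2s2]
    have hnum : L1 * Mdu d u s1 + L2 * Mdu d u s2 ≤
        (L1 * (2 ^ s1 * (C1 * G + 1)) + L2 * (2 ^ s2 * (C2 * G + 1))) +
          (L1 * 2 ^ s1 + L2 * 2 ^ s2) * u ^ s2 := by
      have h := add_le_add (mul_le_mul_of_nonneg_left b1 hL1.le)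
        (mul_le_mul_of_nonneg_left b2 hL2.le)
      calc L1 * Mdu d u s1 + L2 * Mdu d u s2
          ≤ L1 * (2 ^ s1 * (C1 * G + 1) + 2 ^ s1 * u ^ s2) +
            L2 * (2 ^ s2 * (C2 * G + 1) + 2 ^ s2 * u ^ s2) := h
        _ = (L1 * (2 ^ s1 * (C1 * G + 1)) + L2 * (2 ^ s2 * (C2 * G + 1))) +
            (L1 * 2 ^ s1 + L2 * 2 ^ s2) * u ^ s2 := by ring
    unfold twoMomentJ
    rw [← hs1def, ← hs2def, ← hL1def, ← hL2def]
    calc (L1 * Mdu d u s1 + L2 * Mdu d u s2) / (2 * eps)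
        ≤ ((L1 * (2 ^ s1 * (C1 * G + 1)) + L2 * (2 ^ s2 * (C2 * G + 1))) +
            (L1 * 2 ^ s1 + L2 * 2 ^ s2) * u ^ s2) / (2 * eps) := by
          gcongr
      _ = D1 + D2 * u ^ s2 := by rw [hD1def, hD2def]; ring
  have hus2 : u ^ s2 ≤ E * (X + Y) := by
    have hden : (0:ℝ) < Real.sqrt 2 * σ := by positivity
    have h1 : u ^ s2 = ‖x + y‖ ^ s2 / (Real.sqrt 2 * σ) ^ s2 := by
      rw [hudef, Real.div_rpow (norm_nonneg _) hden.le]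
    have h2 : ‖x + y‖ ^ s2 ≤ 2 ^ s2 * (X + Y) := by
      rw [hXdef, hYdef]
      refine (Real.rpow_le_rpow (norm_nonneg _) (norm_add_le x y) hs2).trans ?_
      exact tmk_add_rpow_le (norm_nonneg _) (norm_nonneg _) hs2
    have hdens : (0:ℝ) < (Real.sqrt 2 * σ) ^ s2 := Real.rpow_pos_of_pos hden _
    rw [h1, hEdef, div_mul_eq_mul_div]
    gcongr
  calc twoMomentKernel d p σ eps lam x y ≤ alphaDP d p * twoMomentJ d p eps lam u := hk1
    _ ≤ alphaDP d p * (D1 + D2 * (E * (X + Y))) := by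
        apply mul_le_mul_of_nonneg_left _ hα.le
        refine hJle.trans ?_
        have := mul_le_mul_of_nonneg_left hus2 hD2
        linarith
    _ ≤ (alphaDP d p * (D1 + D2 * E) + 1) * (1 + X + Y) := by
        nlinarith [mul_nonneg (mul_nonneg hα.le hD1) hX,
          mul_nonneg (mul_nonneg hα.le hD1) hY,
          mul_nonneg (mul_nonneg (mul_nonneg hα.le hD2) hE) hX,
          mul_nonneg (mul_nonneg (mul_nonneg hα.le hD2) hE) hY,
          mul_nonneg hα.le hD1, mul_nonneg (mul_nonneg hα.le hD2) hE]


end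
end

section
/- Let k be a positive-definite kernel on ℝ^d and let S_1, …, S_n ∈ ℝ^d be (possibly dependent) random vectors with common marginal distribution P satisfying ∫ k(x,x) dP(x) < ∞. For i ≠ j let Q_{ij} be the joint law of (S_i, S_j), and set r_{ij} := E_{Q_{ij}}[k(S_i, S_j)] − E_{P⊗P}[k(X, X')] with X, X' independent draws from P. Then E[γ_k²(P, P_n)] = (1/n) E[γ_k²(P, P_1)] + (1/n²) Σ_{i ≠ j} r_{ij}, where E[γ_k²(P, P_1)] = E[k(X,X)] − E[k(X,X')] is the expected squared MMD under a single independent sample. -/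
open MeasureTheory ProbabilityTheory Real
open scoped ENNReal NNReal InnerProductSpace

noncomputable section

/-- Cauchy–Schwarz type bound for positive-definite kernels. -/
lemma posdef_abs_le {X : Type*} {k : X → X → ℝ} (hk : IsPosDefKernel k) (x y : X) :
    |k x y| ≤ (k x x + k y y) / 2 := by
  have h1 := hk.2 2 ![x, y] ![1, 1]
  have h2 := hk.2 2 ![x, y] ![1, -1]
  have hs := hk.1 y x
  simp [Fin.sum_univ_two] at h1 h2
  rw [abs_le]
  constructor <;> nlinarith

lemma integrable_dirac'' {X : Type*} [MeasurableSpace X] {f : X → ℝ}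
    (hf : Measurable f) (a : X) : Integrable f (Measure.dirac a) := by
  refine ⟨hf.aestronglyMeasurable, ?_⟩
  rw [HasFiniteIntegral, lintegral_dirac' a (by exact hf.enorm)]
  exact ENNReal.coe_lt_top

lemma integral_empMeasure {X : Type*} [MeasurableSpace X] {n : ℕ} (ω : Fin n → X)
    {f : X → ℝ} (hf : Measurable f) :
    ∫ x, f x ∂(empMeasure ω) = (1 / (n : ℝ)) * ∑ i : Fin n, f (ω i) := by
  rw [empMeasure, integral_smul_measure, integral_finset_sum_measure
    (fun i _ => integrable_dirac'' hf (ω i))]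
  simp [integral_dirac' _ _ hf.stronglyMeasurable, ENNReal.toReal_inv, one_div]

/-- decomposition of the expected squared MMD for identically distributed
but possibly dependent samples into the i.i.d. term and pairwise-correlation terms. -/
theorem expected_mmdSq_dependent {d : ℕ} (k : Euc d → Euc d → ℝ) (hk : IsPosDefKernel k)
    (hkm : Measurable (Function.uncurry k))
    {Ω : Type*} [MeasurableSpace Ω] (μ : Measure Ω) [IsProbabilityMeasure μ]
    (n : ℕ) (hn : 0 < n) (S : Fin n → Ω → Euc d) (hS : ∀ i, Measurable (S i))
    (P : Measure (Euc d)) (hP : ∀ i, μ.map (S i) = P)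
    (hint : Integrable (fun x => k x x) P) :
    (∫ ω, mmdSq k P (empMeasure fun i => S i ω) ∂μ) =
      (1 / n) * ((∫ x, k x x ∂P) - ∫ x, ∫ y, k x y ∂P ∂P) +
        (1 / (n : ℝ) ^ 2) * ∑ q ∈ Finset.univ.offDiag,
          ((∫ ω, k (S q.1 ω) (S q.2 ω) ∂μ) - ∫ x, ∫ y, k x y ∂P ∂P) := by
  classical
  have hn' : (n : ℝ) ≠ 0 := Nat.cast_ne_zero.mpr hn.ne'
  set i0 : Fin n := ⟨0, hn⟩
  have hprob : IsProbabilityMeasure P := by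
    rw [← hP i0]; exact Measure.isProbabilityMeasure_map (hS i0).aemeasurable
  have hkd : Measurable fun x : Euc d => k x x :=
    hkm.comp (measurable_id.prodMk measurable_id)
  have habs : ∀ x y, |k x y| ≤ (k x x + k y y) / 2 := posdef_abs_le hk
  have hky : ∀ y, Measurable fun x => k x y := fun y =>
    hkm.comp (measurable_id.prodMk measurable_const)
  have hkx : ∀ x, Measurable (k x) := fun x =>
    hkm.comp (measurable_const.prodMk measurable_id)
  set D : ℝ := ∫ x, k x x ∂P with hD
  -- integrability in the first variable for fixed second variable
  have hintxy : ∀ y, Integrable (fun x => k x y) P := by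
    intro y
    have hb : Integrable (fun x => (k x x + k y y) / 2) P :=
      (hint.add (integrable_const (k y y))).div_const 2
    refine hb.mono' (hky y).aestronglyMeasurable ?_
    filter_upwards with x
    rw [Real.norm_eq_abs]
    exact habs x y
  -- integrability of the uncurried kernel on the product
  have hintprod : Integrable (Function.uncurry k) (P.prod P) := by
    have h1 : Integrable (fun z : Euc d × Euc d => k z.1 z.1) (P.prod P) := by
      have hmap : (P.prod P).map Prod.fst = P := by
        rw [Measure.map_fst_prod, measure_univ, one_smul]
      have := hint
      rw [← hmap] at this
      exact (integrable_map_measure hkd.aestronglyMeasurable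
        measurable_fst.aemeasurable).mp this
    have h2 : Integrable (fun z : Euc d × Euc d => k z.2 z.2) (P.prod P) := by
      have hmap : (P.prod P).map Prod.snd = P := by
        rw [Measure.map_snd_prod, measure_univ, one_smul]
      have := hint
      rw [← hmap] at this
      exact (integrable_map_measure hkd.aestronglyMeasurable
        measurable_snd.aemeasurable).mp this
    have hb : Integrable (fun z : Euc d × Euc d => (k z.1 z.1 + k z.2 z.2) / 2)
        (P.prod P) := (h1.add h2).div_const 2
    refine hb.mono' hkm.aestronglyMeasurable ?_
    filter_upwards with z
    rw [Real.norm_eq_abs]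
    exact habs z.1 z.2
  -- the "mean embedding" auxiliary function
  set g : Euc d → ℝ := fun y => ∫ x, k x y ∂P with hg
  have hgm : StronglyMeasurable g :=
    hkm.stronglyMeasurable.integral_prod_left'
  set A : ℝ := ∫ x, ∫ y, k x y ∂P ∂P with hA
  have hgA : ∫ y, g y ∂P = A := (integral_integral_swap hintprod).symm
  -- integrability of pairwise evaluations over μ
  have hdiagμ : ∀ i, Integrable (fun ω => k (S i ω) (S i ω)) μ := by
    intro i
    have := hint
    rw [← hP i] at this
    exact (integrable_map_measure hkd.aestronglyMeasurable
      (hS i).aemeasurable).mp this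
  have hpairμ : ∀ i j, Integrable (fun ω => k (S i ω) (S j ω)) μ := by
    intro i j
    have hb : Integrable (fun ω => (k (S i ω) (S i ω) + k (S j ω) (S j ω)) / 2) μ :=
      ((hdiagμ i).add (hdiagμ j)).div_const 2
    refine hb.mono' (hkm.comp ((hS i).prodMk (hS j))).aestronglyMeasurable ?_
    filter_upwards with ω
    rw [Real.norm_eq_abs]
    exact habs _ _
  have hEdiag : ∀ i, ∫ ω, k (S i ω) (S i ω) ∂μ = D := by
    intro i
    rw [hD, ← hP i, integral_map (hS i).aemeasurable hkd.aestronglyMeasurable]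
  -- integrability and expectation of g ∘ S j
  have hgint : Integrable g P := by
    have hbound : Integrable (fun y => (D + k y y) / 2) P := by
      have hb : Integrable (fun y => (D + k y y) / 2) P :=
        ((integrable_const D).add hint).div_const 2
      exact hb
    refine hbound.mono' hgm.aestronglyMeasurable ?_
    filter_upwards with y
    rw [Real.norm_eq_abs]
    calc |g y| ≤ ∫ x, |k x y| ∂P := by
          simpa [hg] using norm_integral_le_integral_norm (μ := P) (fun x => k x y)
      _ ≤ ∫ x, (k x x + k y y) / 2 ∂P := by
          refine integral_mono (hintxy y).abs
            ((hint.add (integrable_const (k y y))).div_const 2) (fun x => habs x y)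
      _ = (D + k y y) / 2 := by
          rw [integral_div, integral_add hint (integrable_const (k y y)),
            integral_const, probReal_univ]
          simp [hD]
  have hgSμ : ∀ j, Integrable (fun ω => g (S j ω)) μ := by
    intro j
    have := hgint
    rw [← hP j] at this
    exact (integrable_map_measure hgm.aestronglyMeasurable
      (hS j).aemeasurable).mp this
  have hEg : ∀ j, ∫ ω, g (S j ω) ∂μ = A := by
    intro j
    rw [← hgA, ← hP j, integral_map (hS j).aemeasurable hgm.aestronglyMeasurable]
  -- pointwise formula for the squared MMD against the empirical measure
  have hpt : ∀ ω, mmdSq k P (empMeasure fun i => S i ω) =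
      A + (1 / (n : ℝ)) ^ 2 * ∑ i : Fin n, ∑ j : Fin n, k (S i ω) (S j ω)
        - 2 * ((1 / (n : ℝ)) * ∑ j : Fin n, g (S j ω)) := by
    intro ω
    have hinner : ∀ x, ∫ y, k x y ∂(empMeasure fun i => S i ω)
        = (1 / (n : ℝ)) * ∑ j : Fin n, k x (S j ω) :=
      fun x => integral_empMeasure _ (hkx x)
    have hterm2 : ∫ x, ∫ y, k x y ∂(empMeasure fun i => S i ω)
          ∂(empMeasure fun i => S i ω)
        = (1 / (n : ℝ)) ^ 2 * ∑ i : Fin n, ∑ j : Fin n, k (S i ω) (S j ω) := by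
      simp only [hinner]
      rw [integral_empMeasure _ (by
        exact measurable_const.mul (Finset.measurable_sum _ (fun j _ => hky (S j ω))))]
      rw [← Finset.mul_sum]
      ring
    have hterm3 : ∫ x, ∫ y, k x y ∂(empMeasure fun i => S i ω) ∂P
        = (1 / (n : ℝ)) * ∑ j : Fin n, g (S j ω) := by
      simp only [hinner]
      rw [integral_const_mul, integral_finset_sum _ (fun j _ => hintxy (S j ω))]
    rw [mmdSq, hterm2, hterm3, ← hA]
  -- integrate
  simp only [hpt]
  have hint2 : Integrable (fun ω =>
      (1 / (n : ℝ)) ^ 2 * ∑ i : Fin n, ∑ j : Fin n, k (S i ω) (S j ω)) μ :=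
    (integrable_finset_sum _ (fun i _ =>
      integrable_finset_sum _ (fun j _ => hpairμ i j))).const_mul _
  have hint3 : Integrable (fun ω =>
      2 * ((1 / (n : ℝ)) * ∑ j : Fin n, g (S j ω))) μ :=
    ((integrable_finset_sum _ (fun j _ => hgSμ j)).const_mul _).const_mul 2
  have hint12 : Integrable (fun ω =>
      A + (1 / (n : ℝ)) ^ 2 * ∑ i : Fin n, ∑ j : Fin n, k (S i ω) (S j ω)) μ :=
    (integrable_const A).add hint2
  rw [integral_sub hint12 hint3, integral_add (integrable_const A) hint2,
    integral_const, probReal_univ, integral_const_mul, integral_const_mul,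
    integral_const_mul, integral_finset_sum _ (fun j _ => hgSμ j),
    integral_finset_sum _ (fun i _ =>
      integrable_finset_sum _ (fun j _ => hpairμ i j))]
  simp only [ENNReal.toReal_one, one_smul]
  have hsum1 : ∀ i : Fin n, ∫ ω, (∑ j : Fin n, k (S i ω) (S j ω)) ∂μ
      = ∑ j : Fin n, ∫ ω, k (S i ω) (S j ω) ∂μ :=
    fun i => integral_finset_sum _ (fun j _ => hpairμ i j)
  simp only [hsum1, hEg, Finset.sum_const, Finset.card_univ, Fintype.card_fin,
    nsmul_eq_mul, smul_eq_mul, one_mul]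
  -- split the double sum into diagonal and off-diagonal parts
  have hsplit : ∑ i : Fin n, ∑ j : Fin n, ∫ ω, k (S i ω) (S j ω) ∂μ
      = (n : ℝ) * D + ∑ q ∈ Finset.univ.offDiag, ∫ ω, k (S q.1 ω) (S q.2 ω) ∂μ := by
    rw [← Finset.sum_product']
    rw [← Finset.diag_union_offDiag (Finset.univ : Finset (Fin n)),
      Finset.sum_union (Finset.disjoint_diag_offDiag _), Finset.sum_diag]
    congr 1
    simp only [hEdiag, Finset.sum_const, Finset.card_univ, Fintype.card_fin,
      nsmul_eq_mul]
  rw [hsplit]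
  have hcard : ((Finset.univ.offDiag : Finset (Fin n × Fin n)).card : ℝ)
      = (n : ℝ) ^ 2 - n := by
    rw [Finset.offDiag_card, Finset.card_univ, Fintype.card_fin]
    have : n ≤ n * n := Nat.le_mul_of_pos_left n hn
    push_cast [this]
    ring
  rw [Finset.sum_sub_distrib, Finset.sum_const, nsmul_eq_mul, hcard]
  field_simp
  ring


end
end
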